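/- For the monochromatic complete bipartite graph K_{m,n} with m ≥ n ≥ 2 and m+n ≥ 9: pc_opt'(K_{m,n}) = 2 if n ∈ {2,3}, and pc_opt'(K_{m,n}) = 3 if n ≥ 4, where pc_opt' counts only the number of recolored edges. -/

import Mathlib

open SimpleGraph

/-- A walk is properly colored: no two consecutive edges share a color. -/
def ProperWalk {V : Type*} {G : SimpleGraph V} (c : Sym2 V → ℕ) {u v : V} (p : G.Walk u v) : Prop :=
  (p.edges.map c).Chain' (· ≠ ·)

/-- An edge-colored graph is properly connected. -/
def ProperlyConnected {V : Type*} (G : SimpleGraph V) (c : Sym2 V → ℕ) : Prop :=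
  ∀ u v : V, u ≠ v → ∃ p : G.Walk u v, p.IsPath ∧ ProperWalk c p

/-- Number of edges recolored away from the base color 0. -/
noncomputable def numRecolored {V : Type*} (G : SimpleGraph V) (c : Sym2 V → ℕ) : ℕ :=
  {e | e ∈ G.edgeSet ∧ c e ≠ 0}.ncard

/-- Number of new colors used. -/
noncomputable def numNewColors {V : Type*} (G : SimpleGraph V) (c : Sym2 V → ℕ) : ℕ :=
  (c '' {e | e ∈ G.edgeSet ∧ c e ≠ 0}).ncard

/-- Optimal proper connection number: minimum of p + q. -/
noncomputable def pcOpt {V : Type*} (G : SimpleGraph V) : ℕ :=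
  sInf { n | ∃ c : Sym2 V → ℕ, ProperlyConnected G c ∧
    n = numRecolored G c + numNewColors G c }

/-- Variant counting only the number of recolored edges. -/
noncomputable def pcOpt' {V : Type*} (G : SimpleGraph V) : ℕ :=
  sInf { p | ∃ c : Sym2 V → ℕ, ProperlyConnected G c ∧ p = numRecolored G c }


open Sum

section Aux

/-- In a list with no two equal consecutive entries, at most about half the entries are zero. -/
lemma chain_count : ∀ (k : ℕ) (l : List ℕ), l.length ≤ k → l.Chain' (· ≠ ·) →
    l.length ≤ 2 * l.countP (· ≠ 0) + 1 := by
  intro k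
  induction k with
  | zero => intro l hl _; omega
  | succ k ih =>
    intro l hl hc
    match l with
    | [] => simp
    | [a] => simp
    | a :: b :: t =>
      have h1 : a ≠ b := (List.isChain_cons_cons.mp hc).1
      have h2 : t.Chain' (· ≠ ·) := ((List.isChain_cons_cons.mp hc).2).tail
      have h3 := ih t (by simp at hl ⊢; omega) h2
      have hab : (1 : ℕ) ≤ [a, b].countP (· ≠ 0) := by
        by_cases ha : a = 0
        · have hb : b ≠ 0 := by rw [ha] at h1; exact fun h => h1 h.symm
          simp [List.countP_cons, hb]
        · simp [List.countP_cons, ha]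
      have e1 : (a :: b :: t).countP (· ≠ 0) = [a,b].countP (· ≠ 0) + t.countP (· ≠ 0) := by
        simp [List.countP_cons]; omega
      simp only [List.length_cons] at *
      omega

lemma countP_le_ncard {V : Type*} [Fintype V] [DecidableEq V] {G : SimpleGraph V} (c : Sym2 V → ℕ)
    {u v : V} (p : G.Walk u v) (hp : p.IsPath) :
    p.edges.countP (fun e => c e ≠ 0) ≤ {e | e ∈ G.edgeSet ∧ c e ≠ 0}.ncard := by
  classical
  have hnd : p.edges.Nodup := hp.edges_nodup
  have hnd2 : (p.edges.filter (fun e => c e ≠ 0)).Nodup := hnd.filter _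
  rw [List.countP_eq_length_filter]
  rw [← List.toFinset_card_of_nodup hnd2]
  have hsub : ((p.edges.filter (fun e => c e ≠ 0)).toFinset : Set (Sym2 V)) ⊆
      {e | e ∈ G.edgeSet ∧ c e ≠ 0} := by
    intro e he
    simp only [List.coe_toFinset, Set.mem_setOf_eq, List.mem_filter, decide_not,
      Bool.not_eq_eq_eq_not, Bool.not_true, decide_eq_false_iff_not] at he
    exact ⟨p.edges_subset_edgeSet he.1, he.2⟩
  calc ((p.edges.filter (fun e => c e ≠ 0)).toFinset).card
      = ((p.edges.filter (fun e => c e ≠ 0)).toFinset : Set (Sym2 V)).ncard := by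
        rw [Set.ncard_coe_finset]
    _ ≤ _ := Set.ncard_le_ncard hsub (Set.toFinite _)

lemma walk_len_le {V : Type*} [Fintype V] [DecidableEq V] {G : SimpleGraph V} (c : Sym2 V → ℕ)
    {u v : V} (p : G.Walk u v) (hp : p.IsPath) (hw : ProperWalk c p) (k : ℕ)
    (hS : {e | e ∈ G.edgeSet ∧ c e ≠ 0}.ncard ≤ k) : p.length ≤ 2 * k + 1 := by
  have h1 := chain_count (p.edges.map c).length (p.edges.map c) le_rfl hw
  have h2 : (p.edges.map c).countP (· ≠ 0) = p.edges.countP (fun e => c e ≠ 0) := by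
    rw [List.countP_map]; rfl
  have h3 := countP_le_ncard c p hp
  have h4 : p.edges.length = p.length := p.length_edges
  simp only [List.length_map] at h1
  omega

/-- The set of recolored edges. -/
def Scol (m n : ℕ) (c : Sym2 (Fin m ⊕ Fin n) → ℕ) : Set (Sym2 (Fin m ⊕ Fin n)) :=
  {e | e ∈ (completeBipartiteGraph (Fin m) (Fin n)).edgeSet ∧ c e ≠ 0}

variable {m n : ℕ}

lemma edge_form {e : Sym2 (Fin m ⊕ Fin n)}
    (he : e ∈ (completeBipartiteGraph (Fin m) (Fin n)).edgeSet) :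
    ∃ x y, e = s(inl x, inr y) := by
  induction e using Sym2.ind with
  | _ a b =>
    rw [SimpleGraph.mem_edgeSet] at he
    rcases a with x | z <;> rcases b with x' | z' <;> simp at he
    · exact ⟨x, z', rfl⟩
    · exact ⟨x', z, Sym2.eq_swap⟩

lemma pick2 {N : ℕ} (hN : 4 ≤ N) (a b : Fin N) :
    ∃ y y' : Fin N, y ≠ y' ∧ y ≠ a ∧ y ≠ b ∧ y' ≠ a ∧ y' ≠ b := by
  classical
  have hT : ({a, b} : Finset (Fin N)).card ≤ 2 := Finset.card_insert_le _ _ |>.trans (by simp)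
  have hcard : 2 ≤ (Finset.univ \ ({a, b} : Finset (Fin N))).card := by
    have := Finset.card_sdiff_of_subset (Finset.subset_univ ({a, b} : Finset (Fin N)))
    rw [this, Finset.card_univ, Fintype.card_fin]
    omega
  obtain ⟨y, hy, y', hy', hne⟩ := Finset.one_lt_card.mp
    (show 1 < (Finset.univ \ ({a, b} : Finset (Fin N))).card by omega)
  simp only [Finset.mem_sdiff, Finset.mem_insert, Finset.mem_singleton, not_or] at hy hy'
  exact ⟨y, y', hne, hy.2.1, hy.2.2, hy'.2.1, hy'.2.2⟩

lemma avoid_right (c : Sym2 (Fin m ⊕ Fin n) → ℕ) (hS : (Scol m n c).ncard ≤ 2) (hn : 4 ≤ n) :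
    ∃ y y' : Fin n, y ≠ y' ∧ ∀ e ∈ Scol m n c,
      (inr y : Fin m ⊕ Fin n) ∉ e ∧ (inr y' : Fin m ⊕ Fin n) ∉ e := by
  obtain ⟨a, b, hab⟩ : ∃ a b : Fin n, ∀ e ∈ Scol m n c, ∀ y : Fin n,
      y ≠ a → y ≠ b → (inr y : Fin m ⊕ Fin n) ∉ e := by
    interval_cases h : (Scol m n c).ncard
    · have : Scol m n c = ∅ := Set.ncard_eq_zero (Set.toFinite _) |>.mp h
      exact ⟨⟨0, by omega⟩, ⟨0, by omega⟩, by simp [this]⟩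
    · obtain ⟨e, he⟩ := Set.ncard_eq_one.mp h
      obtain ⟨xe, ye, rfl⟩ := edge_form (show e ∈ _ from (he ▸ rfl : e ∈ Scol m n c)).1
      refine ⟨ye, ye, ?_⟩
      intro f hf y hy _ hmem
      rw [he, Set.mem_singleton_iff] at hf
      subst hf
      rcases Sym2.mem_iff.mp hmem with h' | h' <;> simp_all
    · obtain ⟨e, f, hef, hefe⟩ := Set.ncard_eq_two.mp h
      have he : e ∈ Scol m n c := by rw [hefe]; left; rfl
      have hf : f ∈ Scol m n c := by rw [hefe]; right; rfl
      obtain ⟨xe, ye, rfl⟩ := edge_form he.1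
      obtain ⟨xf, yf, rfl⟩ := edge_form hf.1
      refine ⟨ye, yf, ?_⟩
      intro g hg y hy1 hy2 hmem
      rw [hefe] at hg
      rcases hg with rfl | rfl <;>
        rcases Sym2.mem_iff.mp hmem with h' | h' <;> simp_all
  obtain ⟨y, y', hne, h1, h2, h3, h4⟩ := pick2 hn a b
  exact ⟨y, y', hne, fun e he => ⟨hab e he y h1 h2, hab e he y' h3 h4⟩⟩

lemma avoid_left (c : Sym2 (Fin m ⊕ Fin n) → ℕ) (hS : (Scol m n c).ncard ≤ 2) (hm : 4 ≤ m) :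
    ∃ x x' : Fin m, x ≠ x' ∧ ∀ e ∈ Scol m n c,
      (inl x : Fin m ⊕ Fin n) ∉ e ∧ (inl x' : Fin m ⊕ Fin n) ∉ e := by
  obtain ⟨a, b, hab⟩ : ∃ a b : Fin m, ∀ e ∈ Scol m n c, ∀ x : Fin m,
      x ≠ a → x ≠ b → (inl x : Fin m ⊕ Fin n) ∉ e := by
    interval_cases h : (Scol m n c).ncard
    · have : Scol m n c = ∅ := Set.ncard_eq_zero (Set.toFinite _) |>.mp h
      exact ⟨⟨0, by omega⟩, ⟨0, by omega⟩, by simp [this]⟩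
    · obtain ⟨e, he⟩ := Set.ncard_eq_one.mp h
      obtain ⟨xe, ye, rfl⟩ := edge_form (show e ∈ _ from (he ▸ rfl : e ∈ Scol m n c)).1
      refine ⟨xe, xe, ?_⟩
      intro f hf x hx _ hmem
      rw [he, Set.mem_singleton_iff] at hf
      subst hf
      rcases Sym2.mem_iff.mp hmem with h' | h' <;> simp_all
    · obtain ⟨e, f, hef, hefe⟩ := Set.ncard_eq_two.mp h
      have he : e ∈ Scol m n c := by rw [hefe]; left; rfl
      have hf : f ∈ Scol m n c := by rw [hefe]; right; rfl
      obtain ⟨xe, ye, rfl⟩ := edge_form he.1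
      obtain ⟨xf, yf, rfl⟩ := edge_form hf.1
      refine ⟨xe, xf, ?_⟩
      intro g hg x hx1 hx2 hmem
      rw [hefe] at hg
      rcases hg with rfl | rfl <;>
        rcases Sym2.mem_iff.mp hmem with h' | h' <;> simp_all
  obtain ⟨x, x', hne, h1, h2, h3, h4⟩ := pick2 hm a b
  exact ⟨x, x', hne, fun e he => ⟨hab e he x h1 h2, hab e he x' h3 h4⟩⟩

end Aux

variable {m n : ℕ}

lemma right_pair (c : Sym2 (Fin m ⊕ Fin n) → ℕ) (hS : (Scol m n c).ncard ≤ 2)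
    (y y' : Fin n) (hyy : y ≠ y')
    (havoid : ∀ e ∈ Scol m n c, (inr y : Fin m ⊕ Fin n) ∉ e ∧ (inr y' : Fin m ⊕ Fin n) ∉ e)
    (p : (completeBipartiteGraph (Fin m) (Fin n)).Walk (inr y) (inr y'))
    (hp : p.IsPath) (hw : ProperWalk c p) :
    ∃ (x1 x2 : Fin m) (z : Fin n), x1 ≠ x2 ∧
      Scol m n c = {s(inl x1, inr z), s(inl x2, inr z)} := by
  have hlen : p.length ≤ 5 := walk_len_le c p hp hw 2 hS
  -- first edge color 0
  cases p with
  | nil => exact absurd rfl hyy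
  | cons h1 q =>
    rename_i w1
    obtain ⟨x1, rfl⟩ : ∃ x, w1 = inl x := by
      rcases w1 with x | z
      · exact ⟨x, rfl⟩
      · simp at h1
    cases q with
    | cons h2 q2 =>
      rename_i w2
      obtain ⟨z1, rfl⟩ : ∃ z, w2 = inr z := by
        rcases w2 with x | z
        · simp at h2
        · exact ⟨z, rfl⟩
      have hc1 : c s(inr y, inl x1) = 0 := by
        by_contra hne
        exact (havoid _ ⟨(completeBipartiteGraph (Fin m) (Fin n)).mem_edgeSet.mpr h1, hne⟩).1
          (Sym2.mem_mk_left _ _)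
      cases q2 with
      | nil =>
        -- length 2 : contradiction
        have hc2 : c s(inl x1, inr y') = 0 := by
          by_contra hne
          exact (havoid _ ⟨(completeBipartiteGraph (Fin m) (Fin n)).mem_edgeSet.mpr h2, hne⟩).2
            (Sym2.mem_mk_right _ _)
        simp [ProperWalk, List.Chain', hc1, hc2] at hw
      | cons h3 q3 =>
        rename_i w3
        obtain ⟨x2, rfl⟩ : ∃ x, w3 = inl x := by
          rcases w3 with x | z
          · exact ⟨x, rfl⟩
          · simp at h3
        cases q3 with
        | cons h4 q4 =>
          rename_i w4
          obtain ⟨z2, rfl⟩ : ∃ z, w4 = inr z := by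
            rcases w4 with x | z
            · simp at h4
            · exact ⟨z, rfl⟩
          cases q4 with
          | nil =>
            -- length 4 main case
            have hc4 : c s(inl x2, inr y') = 0 := by
              by_contra hne
              exact (havoid _ ⟨(completeBipartiteGraph (Fin m) (Fin n)).mem_edgeSet.mpr h4, hne⟩).2
                (Sym2.mem_mk_right _ _)
            simp only [ProperWalk, SimpleGraph.Walk.edges_cons, SimpleGraph.Walk.edges_nil,
              List.map_cons, List.map_nil, List.Chain', List.isChain_cons_cons, List.isChain_singleton, and_true] at hw
            obtain ⟨hw1, hw2, hw3⟩ := hw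
            rw [hc1] at hw1
            rw [hc4] at hw3
            have hx12 : x1 ≠ x2 := by
              have := hp.support_nodup
              simp only [SimpleGraph.Walk.support_cons, SimpleGraph.Walk.support_nil,
                List.nodup_cons, List.mem_cons, List.mem_singleton, List.nodup_nil] at this
              intro h; subst h
              tauto
            have he23 : s(inl x1, inr z1) ≠ (s(inr z1, inl x2) : Sym2 (Fin m ⊕ Fin n)) := by
              intro h
              rw [Sym2.eq_iff] at h
              rcases h with ⟨h1, -⟩ | ⟨h1, -⟩
              · simp at h1
              · exact hx12 (inl.inj h1)
            have hmem2 : s(inl x1, inr z1) ∈ Scol m n c :=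
              ⟨(completeBipartiteGraph (Fin m) (Fin n)).mem_edgeSet.mpr h2, Ne.symm hw1⟩
            have hmem3 : (s(inr z1, inl x2) : Sym2 (Fin m ⊕ Fin n)) ∈ Scol m n c :=
              ⟨(completeBipartiteGraph (Fin m) (Fin n)).mem_edgeSet.mpr h3, hw3⟩
            have hsub : ({s(inl x1, inr z1), s(inr z1, inl x2)} : Set (Sym2 (Fin m ⊕ Fin n))) ⊆
                Scol m n c := by
              intro e he
              rcases he with rfl | rfl
              · exact hmem2
              · exact hmem3
            have heq := Set.eq_of_subset_of_ncard_le hsub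
              (by rw [Set.ncard_pair he23]; exact hS) (Set.toFinite _)
            refine ⟨x1, x2, z1, hx12, ?_⟩
            rw [← heq, Sym2.eq_swap (a := (inr z1 : Fin m ⊕ Fin n)) (b := inl x2)]
          | cons h5 q5 =>
            rename_i w5
            obtain ⟨x3, rfl⟩ : ∃ x, w5 = inl x := by
              rcases w5 with x | z
              · exact ⟨x, rfl⟩
              · simp at h5
            cases q5 with
            | cons h6 q6 =>
              simp only [SimpleGraph.Walk.length_cons] at hlen
              omega

lemma left_pair (c : Sym2 (Fin m ⊕ Fin n) → ℕ) (hS : (Scol m n c).ncard ≤ 2)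
    (x x' : Fin m) (hxx : x ≠ x')
    (havoid : ∀ e ∈ Scol m n c, (inl x : Fin m ⊕ Fin n) ∉ e ∧ (inl x' : Fin m ⊕ Fin n) ∉ e)
    (p : (completeBipartiteGraph (Fin m) (Fin n)).Walk (inl x) (inl x'))
    (hp : p.IsPath) (hw : ProperWalk c p) :
    ∃ (y1 y2 : Fin n) (z : Fin m), y1 ≠ y2 ∧
      Scol m n c = {s(inl z, inr y1), s(inl z, inr y2)} := by
  have hlen : p.length ≤ 5 := walk_len_le c p hp hw 2 hS
  cases p with
  | nil => exact absurd rfl hxx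
  | cons h1 q =>
    rename_i w1
    obtain ⟨y1, rfl⟩ : ∃ y, w1 = inr y := by
      rcases w1 with a | b
      · simp at h1
      · exact ⟨b, rfl⟩
    cases q with
    | cons h2 q2 =>
      rename_i w2
      obtain ⟨x1, rfl⟩ : ∃ a, w2 = inl a := by
        rcases w2 with a | b
        · exact ⟨a, rfl⟩
        · simp at h2
      have hc1 : c s(inl x, inr y1) = 0 := by
        by_contra hne
        exact (havoid _ ⟨(completeBipartiteGraph (Fin m) (Fin n)).mem_edgeSet.mpr h1, hne⟩).1
          (Sym2.mem_mk_left _ _)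
      cases q2 with
      | nil =>
        have hc2 : c s(inr y1, inl x') = 0 := by
          by_contra hne
          exact (havoid _ ⟨(completeBipartiteGraph (Fin m) (Fin n)).mem_edgeSet.mpr h2, hne⟩).2
            (Sym2.mem_mk_right _ _)
        simp [ProperWalk, List.Chain', hc1, hc2] at hw
      | cons h3 q3 =>
        rename_i w3
        obtain ⟨y2, rfl⟩ : ∃ b, w3 = inr b := by
          rcases w3 with a | b
          · simp at h3
          · exact ⟨b, rfl⟩
        cases q3 with
        | cons h4 q4 =>
          rename_i w4
          obtain ⟨x2, rfl⟩ : ∃ a, w4 = inl a := by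
            rcases w4 with a | b
            · exact ⟨a, rfl⟩
            · simp at h4
          cases q4 with
          | nil =>
            have hc4 : c s(inr y2, inl x') = 0 := by
              by_contra hne
              exact (havoid _ ⟨(completeBipartiteGraph (Fin m) (Fin n)).mem_edgeSet.mpr h4, hne⟩).2
                (Sym2.mem_mk_right _ _)
            simp only [ProperWalk, SimpleGraph.Walk.edges_cons, SimpleGraph.Walk.edges_nil,
              List.map_cons, List.map_nil, List.Chain', List.isChain_cons_cons, List.isChain_singleton, and_true] at hw
            obtain ⟨hw1, hw2, hw3⟩ := hw
            rw [hc1] at hw1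
            rw [hc4] at hw3
            have hy12 : y1 ≠ y2 := by
              have := hp.support_nodup
              simp only [SimpleGraph.Walk.support_cons, SimpleGraph.Walk.support_nil,
                List.nodup_cons, List.mem_cons, List.mem_singleton, List.nodup_nil] at this
              intro h; subst h
              tauto
            have he23 : (s(inr y1, inl x1) : Sym2 (Fin m ⊕ Fin n)) ≠ s(inl x1, inr y2) := by
              intro h
              rw [Sym2.eq_iff] at h
              rcases h with ⟨h1', -⟩ | ⟨h1', -⟩
              · simp at h1'
              · exact hy12 (inr.inj h1')
            have hmem2 : (s(inr y1, inl x1) : Sym2 (Fin m ⊕ Fin n)) ∈ Scol m n c :=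
              ⟨(completeBipartiteGraph (Fin m) (Fin n)).mem_edgeSet.mpr h2, Ne.symm hw1⟩
            have hmem3 : (s(inl x1, inr y2) : Sym2 (Fin m ⊕ Fin n)) ∈ Scol m n c :=
              ⟨(completeBipartiteGraph (Fin m) (Fin n)).mem_edgeSet.mpr h3, hw3⟩
            have hsub : ({s(inr y1, inl x1), s(inl x1, inr y2)} : Set (Sym2 (Fin m ⊕ Fin n))) ⊆
                Scol m n c := by
              intro e he
              rcases he with rfl | rfl
              · exact hmem2
              · exact hmem3
            have heq := Set.eq_of_subset_of_ncard_le hsub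
              (by rw [Set.ncard_pair he23]; exact hS) (Set.toFinite _)
            refine ⟨y1, y2, x1, hy12, ?_⟩
            rw [← heq, Sym2.eq_swap (a := (inr y1 : Fin m ⊕ Fin n)) (b := inl x1)]
          | cons h5 q5 =>
            rename_i w5
            obtain ⟨y3, rfl⟩ : ∃ b, w5 = inr b := by
              rcases w5 with a | b
              · simp at h5
              · exact ⟨b, rfl⟩
            cases q5 with
            | cons h6 q6 =>
              simp only [SimpleGraph.Walk.length_cons] at hlen
              omega

lemma lower_two (hm : 4 ≤ m) (c : Sym2 (Fin m ⊕ Fin n) → ℕ)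
    (hPC : ProperlyConnected (completeBipartiteGraph (Fin m) (Fin n)) c) :
    2 ≤ (Scol m n c).ncard := by
  by_contra hlt
  push_neg at hlt
  have hS : (Scol m n c).ncard ≤ 2 := by omega
  obtain ⟨x, x', hxx, havoid⟩ := avoid_left c hS hm
  obtain ⟨p, hp, hw⟩ := hPC (inl x) (inl x') (by simp [hxx])
  obtain ⟨y1, y2, z, hy, heq⟩ := left_pair c hS x x' hxx havoid p hp hw
  have : (Scol m n c).ncard = 2 := by
    rw [heq]
    exact Set.ncard_pair (by simp [Sym2.eq_iff, hy])
  omega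

lemma lower_three (hm : 4 ≤ m) (hn : 4 ≤ n) (c : Sym2 (Fin m ⊕ Fin n) → ℕ)
    (hPC : ProperlyConnected (completeBipartiteGraph (Fin m) (Fin n)) c) :
    3 ≤ (Scol m n c).ncard := by
  by_contra hlt
  push_neg at hlt
  have hS : (Scol m n c).ncard ≤ 2 := by omega
  obtain ⟨x, x', hxx, havoidL⟩ := avoid_left c hS hm
  obtain ⟨pL, hpL, hwL⟩ := hPC (inl x) (inl x') (by simp [hxx])
  obtain ⟨y1, y2, z, hy, heqL⟩ := left_pair c hS x x' hxx havoidL pL hpL hwL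
  obtain ⟨y, y', hyy, havoidR⟩ := avoid_right c hS hn
  obtain ⟨pR, hpR, hwR⟩ := hPC (inr y) (inr y') (by simp [hyy])
  obtain ⟨x1, x2, w, hx, heqR⟩ := right_pair c hS y y' hyy havoidR pR hpR hwR
  rw [heqL] at heqR
  have h1 : (s(inl x1, inr w) : Sym2 (Fin m ⊕ Fin n)) ∈
      ({s(inl z, inr y1), s(inl z, inr y2)} : Set (Sym2 (Fin m ⊕ Fin n))) := by
    rw [heqR]; left; rfl
  have h2 : (s(inl x2, inr w) : Sym2 (Fin m ⊕ Fin n)) ∈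
      ({s(inl z, inr y1), s(inl z, inr y2)} : Set (Sym2 (Fin m ⊕ Fin n))) := by
    rw [heqR]; right; rfl
  simp only [Set.mem_insert_iff, Set.mem_singleton_iff] at h1 h2
  have e1 : x1 = z := by
    rcases h1 with h | h <;> rw [Sym2.eq_iff] at h <;>
      rcases h with ⟨ha, -⟩ | ⟨ha, hb⟩ <;> first | exact inl.inj ha | simp_all
  have e2 : x2 = z := by
    rcases h2 with h | h <;> rw [Sym2.eq_iff] at h <;>
      rcases h with ⟨ha, -⟩ | ⟨ha, hb⟩ <;> first | exact inl.inj ha | simp_all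
  exact hx (e1.trans e2.symm)

def col2 (m n : ℕ) (x0 : Fin m) (y0 y1 : Fin n) : Sym2 (Fin m ⊕ Fin n) → ℕ := fun e =>
  if (inl x0 ∈ e ∧ inr y0 ∈ e) then 1
  else if (inl x0 ∈ e ∧ inr y1 ∈ e) then 2
  else 0

lemma col2_eval (x0 : Fin m) (y0 y1 : Fin n) (a : Fin m) (b : Fin n) :
    col2 m n x0 y0 y1 s(inl a, inr b) =
      if (x0 = a ∧ y0 = b) then 1 else if (x0 = a ∧ y1 = b) then 2 else 0 := by
  simp [col2, Sym2.mem_iff]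

lemma col2_eval' (x0 : Fin m) (y0 y1 : Fin n) (a : Fin m) (b : Fin n) :
    col2 m n x0 y0 y1 s(inr b, inl a) =
      if (x0 = a ∧ y0 = b) then 1 else if (x0 = a ∧ y1 = b) then 2 else 0 := by
  simp [col2, Sym2.mem_iff]

lemma pc_col2 (x0 : Fin m) (y0 y1 : Fin n) (hy : y0 ≠ y1)
    (h3 : ∀ b b' : Fin n, b ≠ b' → b = y0 ∨ b = y1 ∨ b' = y0 ∨ b' = y1) :
    ProperlyConnected (completeBipartiteGraph (Fin m) (Fin n)) (col2 m n x0 y0 y1) := by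
  intro u v huv
  rcases u with a | b <;> rcases v with a' | b'
  · -- left-left
    have ha : a ≠ a' := fun h => huv (by rw [h])
    have ha' : a' ≠ a := Ne.symm ha
    have hy' : y1 ≠ y0 := Ne.symm hy
    by_cases h0 : a = x0
    · subst h0
      refine ⟨.cons (v := (inr y0 : Fin m ⊕ Fin n)) (by simp) (.cons (by simp) .nil), ?_, ?_⟩
      · simp [Walk.isPath_def, ha]
      · simp only [ProperWalk, Walk.edges_cons, Walk.edges_nil, List.map_cons, List.map_nil,
          List.Chain', List.isChain_cons_cons, List.isChain_singleton, and_true, col2_eval, col2_eval']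
        split_ifs <;> first | tauto | norm_num
    · have h0s : x0 ≠ a := fun h => h0 h.symm
      by_cases h0' : a' = x0
      · subst h0'
        refine ⟨.cons (v := (inr y0 : Fin m ⊕ Fin n)) (by simp) (.cons (by simp) .nil), ?_, ?_⟩
        · simp [Walk.isPath_def, ha]
        · simp only [ProperWalk, Walk.edges_cons, Walk.edges_nil, List.map_cons, List.map_nil,
            List.Chain', List.isChain_cons_cons, List.isChain_singleton, and_true, col2_eval, col2_eval']
          split_ifs <;> first | tauto | norm_num
      · have h0s' : x0 ≠ a' := fun h => h0' h.symm
        refine ⟨.cons (v := (inr y0 : Fin m ⊕ Fin n)) (by simp)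
          (.cons (v := (inl x0 : Fin m ⊕ Fin n)) (by simp)
          (.cons (v := (inr y1 : Fin m ⊕ Fin n)) (by simp) (.cons (by simp) .nil))), ?_, ?_⟩
        · simp [Walk.isPath_def, ha, hy, h0, h0', Ne.symm h0, Ne.symm h0']
        · simp only [ProperWalk, Walk.edges_cons, Walk.edges_nil, List.map_cons, List.map_nil,
            List.Chain', List.isChain_cons_cons, List.isChain_singleton, and_true, col2_eval, col2_eval']
          split_ifs <;> first | tauto | norm_num
  · exact ⟨.cons (by simp) .nil, by simp [Walk.isPath_def], by simp [ProperWalk, List.Chain']⟩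
  · exact ⟨.cons (by simp) .nil, by simp [Walk.isPath_def], by simp [ProperWalk, List.Chain']⟩
  · -- right-right
    have hb : b ≠ b' := fun h => huv (by rw [h])
    have hb' : b' ≠ b := Ne.symm hb
    have hy' : y1 ≠ y0 := Ne.symm hy
    by_cases h0 : b = y0
    · subst h0
      refine ⟨.cons (v := (inl x0 : Fin m ⊕ Fin n)) (by simp) (.cons (by simp) .nil), ?_, ?_⟩
      · simp [Walk.isPath_def, hb]
      · simp only [ProperWalk, Walk.edges_cons, Walk.edges_nil, List.map_cons, List.map_nil,
          List.Chain', List.isChain_cons_cons, List.isChain_singleton, and_true, col2_eval, col2_eval']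
        split_ifs <;> first | tauto | norm_num
    · have h0s : y0 ≠ b := fun h => h0 h.symm
      by_cases h0' : b' = y0
      · subst h0'
        refine ⟨.cons (v := (inl x0 : Fin m ⊕ Fin n)) (by simp) (.cons (by simp) .nil), ?_, ?_⟩
        · simp [Walk.isPath_def, hb]
        · simp only [ProperWalk, Walk.edges_cons, Walk.edges_nil, List.map_cons, List.map_nil,
            List.Chain', List.isChain_cons_cons, List.isChain_singleton, and_true, col2_eval, col2_eval']
          split_ifs <;> first | tauto | norm_num
      · have h0s' : y0 ≠ b' := fun h => h0' h.symm
        by_cases h1 : b = y1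
        · subst h1
          refine ⟨.cons (v := (inl x0 : Fin m ⊕ Fin n)) (by simp) (.cons (by simp) .nil), ?_, ?_⟩
          · simp [Walk.isPath_def, hb]
          · simp only [ProperWalk, Walk.edges_cons, Walk.edges_nil, List.map_cons, List.map_nil,
              List.Chain', List.isChain_cons_cons, List.isChain_singleton, and_true, col2_eval, col2_eval']
            split_ifs <;> first | tauto | norm_num
        · have h1s : y1 ≠ b := fun h => h1 h.symm
          by_cases h1' : b' = y1
          · subst h1'
            refine ⟨.cons (v := (inl x0 : Fin m ⊕ Fin n)) (by simp) (.cons (by simp) .nil), ?_, ?_⟩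
            · simp [Walk.isPath_def, hb]
            · simp only [ProperWalk, Walk.edges_cons, Walk.edges_nil, List.map_cons, List.map_nil,
                List.Chain', List.isChain_cons_cons, List.isChain_singleton, and_true, col2_eval, col2_eval']
              split_ifs <;> first | tauto | norm_num
          · have h1s' : y1 ≠ b' := fun h => h1' h.symm
            rcases h3 b b' hb with h | h | h | h <;> simp_all

def col3 (m n : ℕ) (x0 x1 : Fin m) (y0 y1 : Fin n) : Sym2 (Fin m ⊕ Fin n) → ℕ := fun e =>
  if (inl x0 ∈ e ∧ inr y0 ∈ e) then 1
  else if (inl x0 ∈ e ∧ inr y1 ∈ e) then 2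
  else if (inl x1 ∈ e ∧ inr y0 ∈ e) then 2
  else 0

lemma col3_eval (x0 x1 : Fin m) (y0 y1 : Fin n) (a : Fin m) (b : Fin n) :
    col3 m n x0 x1 y0 y1 s(inl a, inr b) =
      if (x0 = a ∧ y0 = b) then 1 else if (x0 = a ∧ y1 = b) then 2
      else if (x1 = a ∧ y0 = b) then 2 else 0 := by
  simp [col3, Sym2.mem_iff]

lemma col3_eval' (x0 x1 : Fin m) (y0 y1 : Fin n) (a : Fin m) (b : Fin n) :
    col3 m n x0 x1 y0 y1 s(inr b, inl a) =
      if (x0 = a ∧ y0 = b) then 1 else if (x0 = a ∧ y1 = b) then 2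
      else if (x1 = a ∧ y0 = b) then 2 else 0 := by
  simp [col3, Sym2.mem_iff]

lemma pc_col3 (x0 x1 : Fin m) (y0 y1 : Fin n) (hx : x0 ≠ x1) (hy : y0 ≠ y1) :
    ProperlyConnected (completeBipartiteGraph (Fin m) (Fin n)) (col3 m n x0 x1 y0 y1) := by
  have hx' : x1 ≠ x0 := Ne.symm hx
  have hy' : y1 ≠ y0 := Ne.symm hy
  intro u v huv
  rcases u with a | b <;> rcases v with a' | b'
  · -- left-left
    have ha : a ≠ a' := fun h => huv (by rw [h])
    have ha' : a' ≠ a := Ne.symm ha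
    by_cases h0 : a = x0
    · subst h0
      refine ⟨.cons (v := (inr y0 : Fin m ⊕ Fin n)) (by simp) (.cons (by simp) .nil), ?_, ?_⟩
      · simp [Walk.isPath_def, ha]
      · simp only [ProperWalk, Walk.edges_cons, Walk.edges_nil, List.map_cons, List.map_nil,
          List.Chain', List.isChain_cons_cons, List.isChain_singleton, and_true, col3_eval, col3_eval']
        split_ifs <;> tauto
    · have h0s : x0 ≠ a := fun h => h0 h.symm
      by_cases h0' : a' = x0
      · subst h0'
        refine ⟨.cons (v := (inr y0 : Fin m ⊕ Fin n)) (by simp) (.cons (by simp) .nil), ?_, ?_⟩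
        · simp [Walk.isPath_def, ha]
        · simp only [ProperWalk, Walk.edges_cons, Walk.edges_nil, List.map_cons, List.map_nil,
            List.Chain', List.isChain_cons_cons, List.isChain_singleton, and_true, col3_eval, col3_eval']
          split_ifs <;> tauto
      · have h0s' : x0 ≠ a' := fun h => h0' h.symm
        by_cases h1 : a = x1
        · subst h1
          refine ⟨.cons (v := (inr y0 : Fin m ⊕ Fin n)) (by simp) (.cons (by simp) .nil), ?_, ?_⟩
          · simp [Walk.isPath_def, ha]
          · simp only [ProperWalk, Walk.edges_cons, Walk.edges_nil, List.map_cons, List.map_nil,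
              List.Chain', List.isChain_cons_cons, List.isChain_singleton, and_true, col3_eval, col3_eval']
            split_ifs <;> tauto
        · have h1s : x1 ≠ a := fun h => h1 h.symm
          by_cases h1' : a' = x1
          · subst h1'
            refine ⟨.cons (v := (inr y0 : Fin m ⊕ Fin n)) (by simp) (.cons (by simp) .nil), ?_, ?_⟩
            · simp [Walk.isPath_def, ha]
            · simp only [ProperWalk, Walk.edges_cons, Walk.edges_nil, List.map_cons, List.map_nil,
                List.Chain', List.isChain_cons_cons, List.isChain_singleton, and_true, col3_eval, col3_eval']
              split_ifs <;> tauto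
          · have h1s' : x1 ≠ a' := fun h => h1' h.symm
            refine ⟨.cons (v := (inr y0 : Fin m ⊕ Fin n)) (by simp)
              (.cons (v := (inl x0 : Fin m ⊕ Fin n)) (by simp)
              (.cons (v := (inr y1 : Fin m ⊕ Fin n)) (by simp) (.cons (by simp) .nil))), ?_, ?_⟩
            · simp [Walk.isPath_def, ha, hy, h0, h0', h0s, h0s']
            · simp only [ProperWalk, Walk.edges_cons, Walk.edges_nil, List.map_cons, List.map_nil,
                List.Chain', List.isChain_cons_cons, List.isChain_singleton, and_true, col3_eval, col3_eval']
              split_ifs <;> tauto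
  · exact ⟨.cons (by simp) .nil, by simp [Walk.isPath_def], by simp [ProperWalk, List.Chain']⟩
  · exact ⟨.cons (by simp) .nil, by simp [Walk.isPath_def], by simp [ProperWalk, List.Chain']⟩
  · -- right-right
    have hb : b ≠ b' := fun h => huv (by rw [h])
    have hb' : b' ≠ b := Ne.symm hb
    by_cases h0 : b = y0
    · subst h0
      refine ⟨.cons (v := (inl x0 : Fin m ⊕ Fin n)) (by simp) (.cons (by simp) .nil), ?_, ?_⟩
      · simp [Walk.isPath_def, hb]
      · simp only [ProperWalk, Walk.edges_cons, Walk.edges_nil, List.map_cons, List.map_nil,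
          List.Chain', List.isChain_cons_cons, List.isChain_singleton, and_true, col3_eval, col3_eval']
        split_ifs <;> tauto
    · have h0s : y0 ≠ b := fun h => h0 h.symm
      by_cases h0' : b' = y0
      · subst h0'
        refine ⟨.cons (v := (inl x0 : Fin m ⊕ Fin n)) (by simp) (.cons (by simp) .nil), ?_, ?_⟩
        · simp [Walk.isPath_def, hb]
        · simp only [ProperWalk, Walk.edges_cons, Walk.edges_nil, List.map_cons, List.map_nil,
            List.Chain', List.isChain_cons_cons, List.isChain_singleton, and_true, col3_eval, col3_eval']
          split_ifs <;> tauto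
      · have h0s' : y0 ≠ b' := fun h => h0' h.symm
        by_cases h1 : b = y1
        · subst h1
          refine ⟨.cons (v := (inl x0 : Fin m ⊕ Fin n)) (by simp) (.cons (by simp) .nil), ?_, ?_⟩
          · simp [Walk.isPath_def, hb]
          · simp only [ProperWalk, Walk.edges_cons, Walk.edges_nil, List.map_cons, List.map_nil,
              List.Chain', List.isChain_cons_cons, List.isChain_singleton, and_true, col3_eval, col3_eval']
            split_ifs <;> tauto
        · have h1s : y1 ≠ b := fun h => h1 h.symm
          by_cases h1' : b' = y1
          · subst h1'
            refine ⟨.cons (v := (inl x0 : Fin m ⊕ Fin n)) (by simp) (.cons (by simp) .nil), ?_, ?_⟩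
            · simp [Walk.isPath_def, hb]
            · simp only [ProperWalk, Walk.edges_cons, Walk.edges_nil, List.map_cons, List.map_nil,
                List.Chain', List.isChain_cons_cons, List.isChain_singleton, and_true, col3_eval, col3_eval']
              split_ifs <;> tauto
          · have h1s' : y1 ≠ b' := fun h => h1' h.symm
            -- path b - x0 - y0 - x1 - b'
            refine ⟨.cons (v := (inl x0 : Fin m ⊕ Fin n)) (by simp)
              (.cons (v := (inr y0 : Fin m ⊕ Fin n)) (by simp)
              (.cons (v := (inl x1 : Fin m ⊕ Fin n)) (by simp) (.cons (by simp) .nil))), ?_, ?_⟩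
            · simp [Walk.isPath_def, hb, hx, h0s, h0s', h0, h0', h1, h1']
            · have e1 : col3 m n x0 x1 y0 y1 s(inr b, inl x0) = 0 := by
                rw [col3_eval']; simp [h0s, h1s, hx']
              have e2 : col3 m n x0 x1 y0 y1 s(inl x0, inr y0) = 1 := by
                rw [col3_eval]; simp
              have e3 : col3 m n x0 x1 y0 y1 s(inr y0, inl x1) = 2 := by
                rw [col3_eval']; simp [hx]
              have e4 : col3 m n x0 x1 y0 y1 s(inl x1, inr b') = 0 := by
                rw [col3_eval]; simp [hx, h0s']
              simp only [ProperWalk, Walk.edges_cons, Walk.edges_nil, List.map_cons, List.map_nil,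
                List.Chain', List.isChain_cons_cons, List.isChain_singleton, and_true, e1, e2, e3, e4]
              norm_num

lemma scol2_ncard (x0 : Fin m) (y0 y1 : Fin n) (hy : y0 ≠ y1) :
    (Scol m n (col2 m n x0 y0 y1)).ncard = 2 := by
  have heq : Scol m n (col2 m n x0 y0 y1) =
      {s(inl x0, inr y0), s(inl x0, inr y1)} := by
    ext e
    simp only [Scol, Set.mem_setOf_eq, Set.mem_insert_iff, Set.mem_singleton_iff]
    constructor
    · rintro ⟨he, hc⟩
      rw [col2] at hc
      split_ifs at hc with h1 h2
      · left; exact (Sym2.mem_and_mem_iff (by simp)).mp h1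
      · right; exact (Sym2.mem_and_mem_iff (by simp)).mp h2
      · exact absurd rfl hc
    · rintro (rfl | rfl)
      · exact ⟨by simp, by simp [col2]⟩
      · exact ⟨by simp, by simp [col2, hy]⟩
  rw [heq]
  exact Set.ncard_pair (by simp [Sym2.eq_iff, hy])

lemma scol3_ncard (x0 x1 : Fin m) (y0 y1 : Fin n) (hx : x0 ≠ x1) (hy : y0 ≠ y1) :
    (Scol m n (col3 m n x0 x1 y0 y1)).ncard = 3 := by
  have heq : Scol m n (col3 m n x0 x1 y0 y1) =
      {s(inl x0, inr y0), s(inl x0, inr y1), s(inl x1, inr y0)} := by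
    ext e
    simp only [Scol, Set.mem_setOf_eq, Set.mem_insert_iff, Set.mem_singleton_iff]
    constructor
    · rintro ⟨he, hc⟩
      rw [col3] at hc
      split_ifs at hc with h1 h2 hh3
      · left; exact (Sym2.mem_and_mem_iff (by simp)).mp h1
      · right; left; exact (Sym2.mem_and_mem_iff (by simp)).mp h2
      · right; right; exact (Sym2.mem_and_mem_iff (by simp)).mp hh3
      · exact absurd rfl hc
    · rintro (rfl | rfl | rfl)
      · exact ⟨by simp, by simp [col3]⟩
      · exact ⟨by simp, by simp [col3, hy]⟩
      · exact ⟨by simp, by simp [col3, hx, Ne.symm hx]⟩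
  rw [heq]
  rw [Set.ncard_insert_of_notMem (by simp [Sym2.eq_iff, hy, hx]) (Set.toFinite _)]
  rw [Set.ncard_pair (by simp [Sym2.eq_iff, hx, hy])]


theorem stmt18 (m n : ℕ) (hmn : n ≤ m) (hn : 2 ≤ n) (h9 : 9 ≤ m + n) :
    (n ≤ 3 → pcOpt' (completeBipartiteGraph (Fin m) (Fin n)) = 2) ∧
    (4 ≤ n → pcOpt' (completeBipartiteGraph (Fin m) (Fin n)) = 3) := by
  have hm5 : 5 ≤ m := by omega
  have hy : (⟨0, by omega⟩ : Fin n) ≠ ⟨1, by omega⟩ := by simp [Fin.ext_iff]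
  have hx : (⟨0, by omega⟩ : Fin m) ≠ ⟨1, by omega⟩ := by simp [Fin.ext_iff]
  constructor
  · intro hn3
    have h3 : ∀ b b' : Fin n, b ≠ b' →
        b = ⟨0, by omega⟩ ∨ b = ⟨1, by omega⟩ ∨ b' = ⟨0, by omega⟩ ∨ b' = ⟨1, by omega⟩ := by
      rintro ⟨bv, hbv⟩ ⟨bv', hbv'⟩ hbb
      simp only [Fin.ext_iff] at hbb ⊢
      simp only [ne_eq, Fin.mk.injEq] at hbb
      omega
    have hPC := pc_col2 (⟨0, by omega⟩ : Fin m) ⟨0, by omega⟩ ⟨1, by omega⟩ hy h3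
    have h2mem : 2 ∈ {p | ∃ c : Sym2 (Fin m ⊕ Fin n) → ℕ,
        ProperlyConnected (completeBipartiteGraph (Fin m) (Fin n)) c ∧
        p = numRecolored (completeBipartiteGraph (Fin m) (Fin n)) c} := by
      refine ⟨col2 m n ⟨0, by omega⟩ ⟨0, by omega⟩ ⟨1, by omega⟩, hPC, ?_⟩
      exact (scol2_ncard _ _ _ hy).symm
    rw [pcOpt']
    apply le_antisymm
    · exact Nat.sInf_le h2mem
    · apply le_csInf ⟨2, h2mem⟩
      rintro k ⟨c, hc, rfl⟩
      exact lower_two (by omega) c hc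
  · intro hn4
    have hPC := pc_col3 (⟨0, by omega⟩ : Fin m) ⟨1, by omega⟩ ⟨0, by omega⟩ ⟨1, by omega⟩ hx hy
    have h3mem : 3 ∈ {p | ∃ c : Sym2 (Fin m ⊕ Fin n) → ℕ,
        ProperlyConnected (completeBipartiteGraph (Fin m) (Fin n)) c ∧
        p = numRecolored (completeBipartiteGraph (Fin m) (Fin n)) c} := by
      refine ⟨col3 m n ⟨0, by omega⟩ ⟨1, by omega⟩ ⟨0, by omega⟩ ⟨1, by omega⟩, hPC, ?_⟩
      exact (scol3_ncard _ _ _ _ hx hy).symm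
    rw [pcOpt']
    apply le_antisymm
    · exact Nat.sInf_le h3mem
    · apply le_csInf ⟨3, h3mem⟩
      rintro k ⟨c, hc, rfl⟩
      exact lower_three (by omega) hn4 c hc
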